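/- arXiv:2204.03730 — 5 statements merged into one kernel-verified Lean document; each statement's English description precedes it below -/
import Mathlib

section
/- Let H = (V, N, w, c) be a hypergraph, let Π be a k-way partition of H, and let u, v be two distinct nodes lying in the same block of Π. Let H' be the hypergraph obtained from H by contracting u and v, and let Π' be the partition of H' obtained from Π by deleting v from its block. Then for every hyperedge e of H, the connectivity set of the corresponding hyperedge e' of H' under Π' equals the connectivity set of e under Π; in particular λ_{Π'}(e') = λ_Π(e), and e' is a cut hyperedge of Π' if and only if e is a cut hyperedge of Π. -/
open Finset

/-- A hypergraph `H = (V, N, w, c)`: a finite node set, an indexed family of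
hyperedges each with a nonempty pin set contained in the node set, a
nonnegative node-weight function and a nonnegative hyperedge-cost function. -/
structure PinHypergraph (V E : Type*) [DecidableEq V] [Fintype E] where
  nodes : Finset V
  pins : E → Finset V
  pins_subset : ∀ e, pins e ⊆ nodes
  pins_nonempty : ∀ e, (pins e).Nonempty
  w : V → ℝ
  w_nonneg : ∀ x, 0 ≤ w x
  c : E → ℝ
  c_nonneg : ∀ e, 0 ≤ c e

namespace PinHypergraph

variable {V E : Type*} [DecidableEq V] [Fintype E]

/-- `π` is a `k`-way partition of `H`: every node is assigned one of the `k`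
blocks (blocks are automatically pairwise disjoint with union `V`), and every
block is nonempty. -/
def IsPartition (H : PinHypergraph V E) (k : ℕ) (π : V → Fin k) : Prop :=
  ∀ i : Fin k, ∃ x ∈ H.nodes, π x = i

/-- The connectivity set `Λ(e)` of a hyperedge under a partition: the set of
blocks containing at least one pin of `e`. -/
def connSet (H : PinHypergraph V E) {k : ℕ} (π : V → Fin k) (e : E) : Finset (Fin k) :=
  (H.pins e).image π

/-- The connectivity `λ(e) = |Λ(e)|`. -/
def connectivity (H : PinHypergraph V E) {k : ℕ} (π : V → Fin k) (e : E) : ℕ :=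
  (H.connSet π e).card

/-- A hyperedge is a cut hyperedge if its connectivity exceeds one. -/
def IsCut (H : PinHypergraph V E) {k : ℕ} (π : V → Fin k) (e : E) : Prop :=
  1 < H.connectivity π e

/-- The connectivity metric `(λ − 1)_H(Π) = Σ_e (λ(e) − 1)·c(e)`. -/
def connMetric (H : PinHypergraph V E) {k : ℕ} (π : V → Fin k) : ℝ :=
  ∑ e : E, ((H.connectivity π e : ℝ) - 1) * H.c e

/-- The cut metric `cut_H(Π) = Σ_{e cut} c(e)`. -/
def cutMetric (H : PinHypergraph V E) {k : ℕ} (π : V → Fin k) : ℝ :=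
  ∑ e ∈ Finset.univ.filter (fun e => 1 < H.connectivity π e), H.c e

/-- The weight of block `i` of the partition `π`. -/
def blockWeight (H : PinHypergraph V E) {k : ℕ} (π : V → Fin k) (i : Fin k) : ℝ :=
  ∑ x ∈ H.nodes.filter (fun x => π x = i), H.w x

/-- The total node weight of `H`. -/
def totalWeight (H : PinHypergraph V E) : ℝ :=
  ∑ x ∈ H.nodes, H.w x

/-- `π` is `ε`-balanced: every block weighs at most
`(1+ε)·⌈(Σ_{v∈V} w(v))/k⌉`. -/
def IsBalanced (H : PinHypergraph V E) (ε : ℝ) {k : ℕ} (π : V → Fin k) : Prop :=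
  ∀ i : Fin k, H.blockWeight π i ≤ (1 + ε) * (⌈H.totalWeight / (k : ℝ)⌉ : ℝ)

/-- Contraction of the two nodes `u` and `v` (merging `v` into `u`):
`v` is removed from the node set, `w(u)` becomes `w(u) + w(v)`, and in every
hyperedge containing `v` the pin `v` is replaced by `u`; costs are unchanged. -/
def contract (H : PinHypergraph V E) (u v : V) : PinHypergraph V E where
  nodes := insert u (H.nodes.erase v)
  pins := fun e => if v ∈ H.pins e then insert u ((H.pins e).erase v) else H.pins e
  pins_subset := by
    intro e x hx
    by_cases h : v ∈ H.pins e
    · rw [if_pos h] at hx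
      rcases Finset.mem_insert.mp hx with rfl | hx'
      · exact Finset.mem_insert_self _ _
      · rcases Finset.mem_erase.mp hx' with ⟨hxv, hxp⟩
        exact Finset.mem_insert_of_mem (Finset.mem_erase.mpr ⟨hxv, H.pins_subset e hxp⟩)
    · rw [if_neg h] at hx
      have hxv : x ≠ v := fun hEq => h (hEq ▸ hx)
      exact Finset.mem_insert_of_mem (Finset.mem_erase.mpr ⟨hxv, H.pins_subset e hx⟩)
  pins_nonempty := by
    intro e
    by_cases h : v ∈ H.pins e
    · rw [if_pos h]; exact Finset.insert_nonempty _ _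
    · rw [if_neg h]; exact H.pins_nonempty e
  w := fun x => if x = u then H.w u + H.w v else H.w x
  w_nonneg := by
    intro x
    split
    · exact add_nonneg (H.w_nonneg u) (H.w_nonneg v)
    · exact H.w_nonneg x
  c := H.c
  c_nonneg := H.c_nonneg


/-- Contraction of a whole set `S` of nodes into a single new node `uS`:
the resulting node set is `(V \ S) ∪ {uS}`, the new node weighs
`Σ_{v∈S} w(v)`, and in every hyperedge meeting `S` the pins in `S` are
replaced by `uS`; costs are unchanged. -/
def contractSet (H : PinHypergraph V E) (S : Finset V) (uS : V) : PinHypergraph V E where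
  nodes := insert uS (H.nodes \ S)
  pins := fun e => if (H.pins e ∩ S).Nonempty then insert uS (H.pins e \ S) else H.pins e
  pins_subset := by
    intro e x hx
    by_cases h : (H.pins e ∩ S).Nonempty
    · rw [if_pos h] at hx
      rcases Finset.mem_insert.mp hx with rfl | hx'
      · exact Finset.mem_insert_self _ _
      · rcases Finset.mem_sdiff.mp hx' with ⟨hxp, hxS⟩
        exact Finset.mem_insert_of_mem (Finset.mem_sdiff.mpr ⟨H.pins_subset e hxp, hxS⟩)
    · rw [if_neg h] at hx
      have hxS : x ∉ S := fun hmem =>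
        h ⟨x, Finset.mem_inter.mpr ⟨hx, hmem⟩⟩
      exact Finset.mem_insert_of_mem (Finset.mem_sdiff.mpr ⟨H.pins_subset e hx, hxS⟩)
  pins_nonempty := by
    intro e
    by_cases h : (H.pins e ∩ S).Nonempty
    · rw [if_pos h]; exact Finset.insert_nonempty _ _
    · rw [if_neg h]; exact H.pins_nonempty e
  w := fun x => if x = uS then ∑ y ∈ S, H.w y else H.w x
  w_nonneg := by
    intro x
    split
    · exact Finset.sum_nonneg fun y _ => H.w_nonneg y
    · exact H.w_nonneg x
  c := H.c
  c_nonneg := H.c_nonneg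

end PinHypergraph

/-- Contracting two distinct nodes `u, v` lying in the same block
of a `k`-way partition `Π` leaves, for every hyperedge, the connectivity set
(hence the connectivity, hence being a cut hyperedge) unchanged, where the
partition of the contracted hypergraph is `Π` with `v` deleted from its block
(the block assignment of the remaining nodes is unchanged, i.e. `π` itself). -/
theorem connSet_contract_eq {V E : Type*} [DecidableEq V] [Fintype E]
    (H : PinHypergraph V E) (k : ℕ) (π : V → Fin k)
    (hπ : H.IsPartition k π)
    (u v : V) (hu : u ∈ H.nodes) (hv : v ∈ H.nodes) (huv : u ≠ v)
    (hsame : π u = π v) :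
    ∀ e : E,
      (H.contract u v).connSet π e = H.connSet π e ∧
      (H.contract u v).connectivity π e = H.connectivity π e ∧
      ((H.contract u v).IsCut π e ↔ H.IsCut π e) := by
  intro e
  have hmain : (H.contract u v).connSet π e = H.connSet π e := by
    unfold PinHypergraph.connSet PinHypergraph.contract
    dsimp only
    by_cases h : v ∈ H.pins e
    · rw [if_pos h]
      ext i
      simp only [Finset.mem_image, Finset.mem_insert, Finset.mem_erase]
      constructor
      · rintro ⟨x, hx, rfl⟩
        rcases hx with rfl | ⟨hxv, hxp⟩
        · exact ⟨v, h, hsame.symm⟩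
        · exact ⟨x, hxp, rfl⟩
      · rintro ⟨x, hx, rfl⟩
        by_cases hxv : x = v
        · exact ⟨u, Or.inl rfl, by rw [hxv, ← hsame]⟩
        · exact ⟨x, Or.inr ⟨hxv, hx⟩, rfl⟩
    · rw [if_neg h]
  refine ⟨hmain, ?_, ?_⟩
  · unfold PinHypergraph.connectivity
    rw [hmain]
  · unfold PinHypergraph.IsCut PinHypergraph.connectivity
    rw [hmain]
end

section
/- Let H = (V, N, w, c) be a hypergraph, let ε ≥ 0, let Π be an ε-balanced k-way partition of H, and let u, v be two distinct nodes lying in the same block of Π. Let H' be the hypergraph obtained from H by contracting u and v, and let Π' be the partition of H' obtained from Π by deleting v from its block. Then Π' is an ε-balanced k-way partition of H', and moreover (λ − 1)_{H'}(Π') = (λ − 1)_H(Π) and cut_{H'}(Π') = cut_H(Π). -/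
open Finset

/-- A hypergraph `H = (V, N, w, c)`: a finite node set, an indexed family of
hyperedges each with a nonempty pin set contained in the node set, a
nonnegative node-weight function and a nonnegative hyperedge-cost function. -/
structure HGraph (V E : Type*) [DecidableEq V] [Fintype E] where
  nodes : Finset V
  pins : E → Finset V
  pins_subset : ∀ e, pins e ⊆ nodes
  pins_nonempty : ∀ e, (pins e).Nonempty
  w : V → ℝ
  w_nonneg : ∀ x, 0 ≤ w x
  c : E → ℝ
  c_nonneg : ∀ e, 0 ≤ c e

namespace HGraph

variable {V E : Type*} [DecidableEq V] [Fintype E]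

/-- `π` is a `k`-way partition of `H`: every node is assigned one of the `k`
blocks (blocks are automatically pairwise disjoint with union `V`), and every
block is nonempty. -/
def IsPartition (H : HGraph V E) (k : ℕ) (π : V → Fin k) : Prop :=
  ∀ i : Fin k, ∃ x ∈ H.nodes, π x = i

/-- The connectivity set `Λ(e)` of a hyperedge under a partition: the set of
blocks containing at least one pin of `e`. -/
def connSet (H : HGraph V E) {k : ℕ} (π : V → Fin k) (e : E) : Finset (Fin k) :=
  (H.pins e).image π

/-- The connectivity `λ(e) = |Λ(e)|`. -/
def connectivity (H : HGraph V E) {k : ℕ} (π : V → Fin k) (e : E) : ℕ :=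
  (H.connSet π e).card

/-- A hyperedge is a cut hyperedge if its connectivity exceeds one. -/
def IsCut (H : HGraph V E) {k : ℕ} (π : V → Fin k) (e : E) : Prop :=
  1 < H.connectivity π e

/-- The connectivity metric `(λ − 1)_H(Π) = Σ_e (λ(e) − 1)·c(e)`. -/
def connMetric (H : HGraph V E) {k : ℕ} (π : V → Fin k) : ℝ :=
  ∑ e : E, ((H.connectivity π e : ℝ) - 1) * H.c e

/-- The cut metric `cut_H(Π) = Σ_{e cut} c(e)`. -/
def cutMetric (H : HGraph V E) {k : ℕ} (π : V → Fin k) : ℝ :=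
  ∑ e ∈ Finset.univ.filter (fun e => 1 < H.connectivity π e), H.c e

/-- The weight of block `i` of the partition `π`. -/
def blockWeight (H : HGraph V E) {k : ℕ} (π : V → Fin k) (i : Fin k) : ℝ :=
  ∑ x ∈ H.nodes.filter (fun x => π x = i), H.w x

/-- The total node weight of `H`. -/
def totalWeight (H : HGraph V E) : ℝ :=
  ∑ x ∈ H.nodes, H.w x

/-- `π` is `ε`-balanced: every block weighs at most
`(1+ε)·⌈(Σ_{v∈V} w(v))/k⌉`. -/
def IsBalanced (H : HGraph V E) (ε : ℝ) {k : ℕ} (π : V → Fin k) : Prop :=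
  ∀ i : Fin k, H.blockWeight π i ≤ (1 + ε) * (⌈H.totalWeight / (k : ℝ)⌉ : ℝ)

/-- Contraction of the two nodes `u` and `v` (merging `v` into `u`):
`v` is removed from the node set, `w(u)` becomes `w(u) + w(v)`, and in every
hyperedge containing `v` the pin `v` is replaced by `u`; costs are unchanged. -/
def contract (H : HGraph V E) (u v : V) : HGraph V E where
  nodes := insert u (H.nodes.erase v)
  pins := fun e => if v ∈ H.pins e then insert u ((H.pins e).erase v) else H.pins e
  pins_subset := by
    intro e x hx
    try dsimp only at hx
    by_cases h : v ∈ H.pins e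
    · rw [if_pos h] at hx
      rcases Finset.mem_insert.mp hx with rfl | hx'
      · exact Finset.mem_insert_self _ _
      · rcases Finset.mem_erase.mp hx' with ⟨hxv, hxp⟩
        exact Finset.mem_insert_of_mem (Finset.mem_erase.mpr ⟨hxv, H.pins_subset e hxp⟩)
    · rw [if_neg h] at hx
      have hxv : x ≠ v := fun hEq => h (hEq ▸ hx)
      exact Finset.mem_insert_of_mem (Finset.mem_erase.mpr ⟨hxv, H.pins_subset e hx⟩)
  pins_nonempty := by
    intro e
    try dsimp only
    by_cases h : v ∈ H.pins e
    · rw [if_pos h]; exact Finset.insert_nonempty _ _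
    · rw [if_neg h]; exact H.pins_nonempty e
  w := fun x => if x = u then H.w u + H.w v else H.w x
  w_nonneg := by
    intro x
    try dsimp only
    split
    · exact add_nonneg (H.w_nonneg u) (H.w_nonneg v)
    · exact H.w_nonneg x
  c := H.c
  c_nonneg := H.c_nonneg


/-- Contraction of a whole set `S` of nodes into a single new node `uS`:
the resulting node set is `(V \ S) ∪ {uS}`, the new node weighs
`Σ_{v∈S} w(v)`, and in every hyperedge meeting `S` the pins in `S` are
replaced by `uS`; costs are unchanged. -/
def contractSet (H : HGraph V E) (S : Finset V) (uS : V) : HGraph V E where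
  nodes := insert uS (H.nodes \ S)
  pins := fun e => if (H.pins e ∩ S).Nonempty then insert uS (H.pins e \ S) else H.pins e
  pins_subset := by
    intro e x hx
    try dsimp only at hx
    by_cases h : (H.pins e ∩ S).Nonempty
    · rw [if_pos h] at hx
      rcases Finset.mem_insert.mp hx with rfl | hx'
      · exact Finset.mem_insert_self _ _
      · rcases Finset.mem_sdiff.mp hx' with ⟨hxp, hxS⟩
        exact Finset.mem_insert_of_mem (Finset.mem_sdiff.mpr ⟨H.pins_subset e hxp, hxS⟩)
    · rw [if_neg h] at hx
      have hxS : x ∉ S := fun hmem =>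
        h ⟨x, Finset.mem_inter.mpr ⟨hx, hmem⟩⟩
      exact Finset.mem_insert_of_mem (Finset.mem_sdiff.mpr ⟨H.pins_subset e hx, hxS⟩)
  pins_nonempty := by
    intro e
    try dsimp only
    by_cases h : (H.pins e ∩ S).Nonempty
    · rw [if_pos h]; exact Finset.insert_nonempty _ _
    · rw [if_neg h]; exact H.pins_nonempty e
  w := fun x => if x = uS then ∑ y ∈ S, H.w y else H.w x
  w_nonneg := by
    intro x
    try dsimp only
    split
    · exact Finset.sum_nonneg fun y _ => H.w_nonneg y
    · exact H.w_nonneg x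
  c := H.c
  c_nonneg := H.c_nonneg

end HGraph

/-- If `Π` is an `ε`-balanced `k`-way partition of `H` and `u, v`
are distinct nodes in the same block of `Π`, then after contracting `u` and
`v`, the partition obtained from `Π` by deleting `v` from its block (the block
assignment of the remaining nodes is unchanged, i.e. `π` itself) is an
`ε`-balanced `k`-way partition of the contracted hypergraph with the same
connectivity-metric and cut-metric values. -/
theorem contract_partition_balanced_and_metrics {V E : Type*} [DecidableEq V] [Fintype E]
    (H : HGraph V E) (ε : ℝ) (hε : 0 ≤ ε) (k : ℕ) (π : V → Fin k)
    (hπ : H.IsPartition k π) (hbal : H.IsBalanced ε π)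
    (u v : V) (hu : u ∈ H.nodes) (hv : v ∈ H.nodes) (huv : u ≠ v)
    (hsame : π u = π v) :
    (H.contract u v).IsPartition k π ∧
    (H.contract u v).IsBalanced ε π ∧
    (H.contract u v).connMetric π = H.connMetric π ∧
    (H.contract u v).cutMetric π = H.cutMetric π := by
  have hnodes : (H.contract u v).nodes = H.nodes.erase v := by
    show insert u (H.nodes.erase v) = H.nodes.erase v
    exact Finset.insert_eq_self.mpr (Finset.mem_erase.mpr ⟨huv, hu⟩)
  -- connectivity sets are unchanged
  have hconn : ∀ e, (H.contract u v).connSet π e = H.connSet π e := by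
    intro e
    unfold HGraph.connSet HGraph.contract
    dsimp only
    by_cases h : v ∈ H.pins e
    · rw [if_pos h, Finset.image_insert]
      conv_rhs => rw [← Finset.insert_erase h, Finset.image_insert]
      rw [hsame]
    · rw [if_neg h]
  have hconn' : ∀ e, (H.contract u v).connectivity π e = H.connectivity π e := by
    intro e; unfold HGraph.connectivity; rw [hconn]
  -- partition
  refine ⟨?_, ?_, ?_, ?_⟩
  · intro i
    obtain ⟨x, hx, hxi⟩ := hπ i
    by_cases hxv : x = v
    · exact ⟨u, Finset.mem_insert_self _ _, by rw [hsame, ← hxv, hxi]⟩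
    · exact ⟨x, Finset.mem_insert_of_mem (Finset.mem_erase.mpr ⟨hxv, hx⟩), hxi⟩
  · -- balanced: blockWeight and totalWeight are preserved
    have hw : ∀ x : V, x ≠ u → (H.contract u v).w x = H.w x := by
      intro x hx
      show (if x = u then H.w u + H.w v else H.w x) = H.w x
      rw [if_neg hx]
    have hwu : (H.contract u v).w u = H.w u + H.w v := by
      show (if u = u then H.w u + H.w v else H.w u) = H.w u + H.w v
      rw [if_pos rfl]
    have hbw : ∀ i, (H.contract u v).blockWeight π i = H.blockWeight π i := by
      intro i
      unfold HGraph.blockWeight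
      rw [hnodes, Finset.filter_erase]
      set T := H.nodes.filter (fun x => π x = i) with hT
      by_cases hi : π u = i
      · have hvT : v ∈ T := Finset.mem_filter.mpr ⟨hv, by rw [← hsame, hi]⟩
        have huT : u ∈ T.erase v := Finset.mem_erase.mpr
          ⟨huv, Finset.mem_filter.mpr ⟨hu, hi⟩⟩
        rw [← Finset.add_sum_erase _ _ huT, hwu,
            ← Finset.add_sum_erase _ H.w hvT,
            ← Finset.add_sum_erase _ H.w huT]
        have : ∑ x ∈ (T.erase v).erase u, (H.contract u v).w x
            = ∑ x ∈ (T.erase v).erase u, H.w x := by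
          refine Finset.sum_congr rfl fun x hx => hw x ?_
          exact (Finset.mem_erase.mp hx).1
        rw [this]; ring
      · have hvT : v ∉ T := by
          intro hmem
          exact hi (by rw [hsame]; exact (Finset.mem_filter.mp hmem).2)
        rw [Finset.erase_eq_of_notMem hvT]
        refine Finset.sum_congr rfl fun x hx => hw x ?_
        intro hxu
        exact hi (hxu ▸ (Finset.mem_filter.mp hx).2)
    intro i
    rw [hbw]
    have htw : (H.contract u v).totalWeight = H.totalWeight := by
      unfold HGraph.totalWeight
      rw [hnodes]
      have huE : u ∈ H.nodes.erase v := Finset.mem_erase.mpr ⟨huv, hu⟩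
      rw [← Finset.add_sum_erase _ _ huE, hwu,
          ← Finset.add_sum_erase _ H.w hv,
          ← Finset.add_sum_erase _ H.w huE]
      have : ∑ x ∈ (H.nodes.erase v).erase u, (H.contract u v).w x
          = ∑ x ∈ (H.nodes.erase v).erase u, H.w x := by
        refine Finset.sum_congr rfl fun x hx => hw x ?_
        exact (Finset.mem_erase.mp hx).1
      rw [this]; ring
    rw [htw]
    exact hbal i
  · unfold HGraph.connMetric
    refine Finset.sum_congr rfl fun e _ => ?_
    rw [hconn']; rfl
  · unfold HGraph.cutMetric
    have : Finset.univ.filter (fun e => 1 < (H.contract u v).connectivity π e)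
        = Finset.univ.filter (fun e => 1 < H.connectivity π e) := by
      refine Finset.filter_congr fun e _ => ?_
      rw [hconn']
    rw [this]; rfl
end

section
/- Let H = (V, N, w, c) be a hypergraph, let ε ≥ 0, let u, v be two distinct nodes of H, and let H' be the hypergraph obtained from H by contracting u and v. For every ε-balanced k-way partition Π* of H', the partition Π̃ of H obtained from Π* by placing v into the block containing u (and keeping all other node assignments unchanged) is an ε-balanced k-way partition of H, and moreover (λ − 1)_H(Π̃) = (λ − 1)_{H'}(Π*) and cut_H(Π̃) = cut_{H'}(Π*). -/
open Finset

/-- A hypergraph `H = (V, N, w, c)`: a finite node set, an indexed family of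
hyperedges each with a nonempty pin set contained in the node set, a
nonnegative node-weight function and a nonnegative hyperedge-cost function. -/
structure WHypergraph (V E : Type*) [DecidableEq V] [Fintype E] where
  nodes : Finset V
  pins : E → Finset V
  pins_subset : ∀ e, pins e ⊆ nodes
  pins_nonempty : ∀ e, (pins e).Nonempty
  w : V → ℝ
  w_nonneg : ∀ x, 0 ≤ w x
  c : E → ℝ
  c_nonneg : ∀ e, 0 ≤ c e

namespace WHypergraph

variable {V E : Type*} [DecidableEq V] [Fintype E]

/-- `π` is a `k`-way partition of `H`: every node is assigned one of the `k`
blocks (blocks are automatically pairwise disjoint with union `V`), and every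
block is nonempty. -/
def IsPartition (H : WHypergraph V E) (k : ℕ) (π : V → Fin k) : Prop :=
  ∀ i : Fin k, ∃ x ∈ H.nodes, π x = i

/-- The connectivity set `Λ(e)` of a hyperedge under a partition: the set of
blocks containing at least one pin of `e`. -/
def connSet (H : WHypergraph V E) {k : ℕ} (π : V → Fin k) (e : E) : Finset (Fin k) :=
  (H.pins e).image π

/-- The connectivity `λ(e) = |Λ(e)|`. -/
def connectivity (H : WHypergraph V E) {k : ℕ} (π : V → Fin k) (e : E) : ℕ :=
  (H.connSet π e).card

/-- A hyperedge is a cut hyperedge if its connectivity exceeds one. -/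
def IsCut (H : WHypergraph V E) {k : ℕ} (π : V → Fin k) (e : E) : Prop :=
  1 < H.connectivity π e

/-- The connectivity metric `(λ − 1)_H(Π) = Σ_e (λ(e) − 1)·c(e)`. -/
def connMetric (H : WHypergraph V E) {k : ℕ} (π : V → Fin k) : ℝ :=
  ∑ e : E, ((H.connectivity π e : ℝ) - 1) * H.c e

/-- The cut metric `cut_H(Π) = Σ_{e cut} c(e)`. -/
def cutMetric (H : WHypergraph V E) {k : ℕ} (π : V → Fin k) : ℝ :=
  ∑ e ∈ Finset.univ.filter (fun e => 1 < H.connectivity π e), H.c e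

/-- The weight of block `i` of the partition `π`. -/
def blockWeight (H : WHypergraph V E) {k : ℕ} (π : V → Fin k) (i : Fin k) : ℝ :=
  ∑ x ∈ H.nodes.filter (fun x => π x = i), H.w x

/-- The total node weight of `H`. -/
def totalWeight (H : WHypergraph V E) : ℝ :=
  ∑ x ∈ H.nodes, H.w x

/-- `π` is `ε`-balanced: every block weighs at most
`(1+ε)·⌈(Σ_{v∈V} w(v))/k⌉`. -/
def IsBalanced (H : WHypergraph V E) (ε : ℝ) {k : ℕ} (π : V → Fin k) : Prop :=
  ∀ i : Fin k, H.blockWeight π i ≤ (1 + ε) * (⌈H.totalWeight / (k : ℝ)⌉ : ℝ)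

/-- Contraction of the two nodes `u` and `v` (merging `v` into `u`):
`v` is removed from the node set, `w(u)` becomes `w(u) + w(v)`, and in every
hyperedge containing `v` the pin `v` is replaced by `u`; costs are unchanged. -/
def contract (H : WHypergraph V E) (u v : V) : WHypergraph V E where
  nodes := insert u (H.nodes.erase v)
  pins := fun e => if v ∈ H.pins e then insert u ((H.pins e).erase v) else H.pins e
  pins_subset := by
    intro e x hx
    try dsimp only at hx
    by_cases h : v ∈ H.pins e
    · rw [if_pos h] at hx
      rcases Finset.mem_insert.mp hx with rfl | hx'
      · exact Finset.mem_insert_self _ _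
      · rcases Finset.mem_erase.mp hx' with ⟨hxv, hxp⟩
        exact Finset.mem_insert_of_mem (Finset.mem_erase.mpr ⟨hxv, H.pins_subset e hxp⟩)
    · rw [if_neg h] at hx
      have hxv : x ≠ v := fun hEq => h (hEq ▸ hx)
      exact Finset.mem_insert_of_mem (Finset.mem_erase.mpr ⟨hxv, H.pins_subset e hx⟩)
  pins_nonempty := by
    intro e
    try dsimp only
    by_cases h : v ∈ H.pins e
    · rw [if_pos h]; exact Finset.insert_nonempty _ _
    · rw [if_neg h]; exact H.pins_nonempty e
  w := fun x => if x = u then H.w u + H.w v else H.w x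
  w_nonneg := by
    intro x
    try dsimp only
    split
    · exact add_nonneg (H.w_nonneg u) (H.w_nonneg v)
    · exact H.w_nonneg x
  c := H.c
  c_nonneg := H.c_nonneg


/-- Contraction of a whole set `S` of nodes into a single new node `uS`:
the resulting node set is `(V \ S) ∪ {uS}`, the new node weighs
`Σ_{v∈S} w(v)`, and in every hyperedge meeting `S` the pins in `S` are
replaced by `uS`; costs are unchanged. -/
def contractSet (H : WHypergraph V E) (S : Finset V) (uS : V) : WHypergraph V E where
  nodes := insert uS (H.nodes \ S)
  pins := fun e => if (H.pins e ∩ S).Nonempty then insert uS (H.pins e \ S) else H.pins e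
  pins_subset := by
    intro e x hx
    try dsimp only at hx
    by_cases h : (H.pins e ∩ S).Nonempty
    · rw [if_pos h] at hx
      rcases Finset.mem_insert.mp hx with rfl | hx'
      · exact Finset.mem_insert_self _ _
      · rcases Finset.mem_sdiff.mp hx' with ⟨hxp, hxS⟩
        exact Finset.mem_insert_of_mem (Finset.mem_sdiff.mpr ⟨H.pins_subset e hxp, hxS⟩)
    · rw [if_neg h] at hx
      have hxS : x ∉ S := fun hmem =>
        h ⟨x, Finset.mem_inter.mpr ⟨hx, hmem⟩⟩
      exact Finset.mem_insert_of_mem (Finset.mem_sdiff.mpr ⟨H.pins_subset e hx, hxS⟩)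
  pins_nonempty := by
    intro e
    try dsimp only
    by_cases h : (H.pins e ∩ S).Nonempty
    · rw [if_pos h]; exact Finset.insert_nonempty _ _
    · rw [if_neg h]; exact H.pins_nonempty e
  w := fun x => if x = uS then ∑ y ∈ S, H.w y else H.w x
  w_nonneg := by
    intro x
    try dsimp only
    split
    · exact Finset.sum_nonneg fun y _ => H.w_nonneg y
    · exact H.w_nonneg x
  c := H.c
  c_nonneg := H.c_nonneg

end WHypergraph

/-- If `Π*` is an `ε`-balanced `k`-way partition of the hypergraph
obtained from `H` by contracting distinct nodes `u` and `v`, then the partition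
of `H` obtained from `Π*` by placing `v` into the block of `u` (keeping all
other assignments) is an `ε`-balanced `k`-way partition of `H` with the same
connectivity-metric and cut-metric values. -/
theorem uncontract_partition_balanced_and_metrics {V E : Type*} [DecidableEq V] [Fintype E]
    (H : WHypergraph V E) (ε : ℝ) (hε : 0 ≤ ε) (k : ℕ)
    (u v : V) (hu : u ∈ H.nodes) (hv : v ∈ H.nodes) (huv : u ≠ v)
    (πs : V → Fin k)
    (hπs : (H.contract u v).IsPartition k πs)
    (hbal : (H.contract u v).IsBalanced ε πs) :
    H.IsPartition k (fun x => if x = v then πs u else πs x) ∧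
    H.IsBalanced ε (fun x => if x = v then πs u else πs x) ∧
    H.connMetric (fun x => if x = v then πs u else πs x) = (H.contract u v).connMetric πs ∧
    H.cutMetric (fun x => if x = v then πs u else πs x) = (H.contract u v).cutMetric πs := by
  set π : V → Fin k := fun x => if x = v then πs u else πs x with hπdef
  have hπne : ∀ x, x ≠ v → π x = πs x := fun x hx => if_neg hx
  have hπu : π u = πs u := hπne u huv
  have hπv : π v = πs u := if_pos rfl
  -- node set of the contraction
  have huerase : u ∈ H.nodes.erase v := Finset.mem_erase.mpr ⟨huv, hu⟩
  have hnodes' : (H.contract u v).nodes = H.nodes.erase v := by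
    simp only [WHypergraph.contract]
    exact Finset.insert_eq_self.mpr huerase
  have hw' : ∀ x, (H.contract u v).w x = H.w x + (if x = u then H.w v else 0) := by
    intro x
    simp only [WHypergraph.contract]
    by_cases h : x = u
    · subst h; simp
    · simp [h]
  -- connectivity sets agree
  have hcs : ∀ e, H.connSet π e = (H.contract u v).connSet πs e := by
    intro e
    unfold WHypergraph.connSet
    show (H.pins e).image π = ((H.contract u v).pins e).image πs
    have hpins : (H.contract u v).pins e =
        if v ∈ H.pins e then insert u ((H.pins e).erase v) else H.pins e := rfl
    by_cases hve : v ∈ H.pins e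
    · rw [hpins, if_pos hve]
      conv_lhs => rw [← Finset.insert_erase hve]
      rw [Finset.image_insert, Finset.image_insert, hπv]
      congr 1
      exact Finset.image_congr (fun x hx => hπne x (Finset.mem_erase.mp hx).1)
    · rw [hpins, if_neg hve]
      exact Finset.image_congr (fun x hx => hπne x (fun h => hve (h ▸ hx)))
  have hconn : ∀ e, H.connectivity π e = (H.contract u v).connectivity πs e := by
    intro e; unfold WHypergraph.connectivity; rw [hcs e]
  -- partition
  have hpart : H.IsPartition k π := by
    intro i
    obtain ⟨x, hx, hxi⟩ := hπs i
    rw [hnodes'] at hx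
    obtain ⟨hxv, hxn⟩ := Finset.mem_erase.mp hx
    exact ⟨x, hxn, (hπne x hxv).trans hxi⟩
  -- block weights agree
  have hbw : ∀ i, H.blockWeight π i = (H.contract u v).blockWeight πs i := by
    intro i
    unfold WHypergraph.blockWeight
    rw [hnodes']
    have hS : (H.nodes.erase v).filter (fun x => πs x = i)
        = (H.nodes.filter (fun x => π x = i)).erase v := by
      rw [Finset.filter_congr (s := H.nodes.erase v)
        (fun x hx => by simp only [hπne x (Finset.mem_erase.mp hx).1] : ∀ x ∈ H.nodes.erase v,
          ((fun x => πs x = i) x ↔ (fun x => π x = i) x)),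
        Finset.filter_erase]
    have hrhs : ∑ x ∈ (H.nodes.erase v).filter (fun x => πs x = i), (H.contract u v).w x
        = (∑ x ∈ (H.nodes.erase v).filter (fun x => πs x = i), H.w x)
          + (if πs u = i then H.w v else 0) := by
      rw [Finset.sum_congr rfl (fun x _ => hw' x), Finset.sum_add_distrib]
      congr 1
      rw [Finset.sum_ite_eq' _ u (fun _ => H.w v)]
      congr 1
      simp only [Finset.mem_filter, huerase, true_and, eq_iff_iff]
    rw [hrhs, hS]
    by_cases hc : πs u = i
    · have hvmem : v ∈ H.nodes.filter (fun x => π x = i) :=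
        Finset.mem_filter.mpr ⟨hv, hπv.trans hc⟩
      rw [if_pos hc, Finset.sum_erase_add _ _ hvmem]
    · have hvmem : v ∉ H.nodes.filter (fun x => π x = i) := by
        simp only [Finset.mem_filter, hπv]
        exact fun h => hc h.2
      rw [if_neg hc, add_zero, Finset.erase_eq_of_notMem hvmem]
  -- total weights agree
  have htw : H.totalWeight = (H.contract u v).totalWeight := by
    unfold WHypergraph.totalWeight
    rw [hnodes']
    rw [Finset.sum_congr rfl (fun x _ => hw' x), Finset.sum_add_distrib]
    rw [Finset.sum_ite_eq' _ u (fun _ => H.w v), if_pos huerase]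
    exact (Finset.sum_erase_add _ _ hv).symm
  refine ⟨hpart, ?_, ?_, ?_⟩
  · intro i
    calc H.blockWeight π i = (H.contract u v).blockWeight πs i := hbw i
      _ ≤ (1 + ε) * (⌈(H.contract u v).totalWeight / (k : ℝ)⌉ : ℝ) := hbal i
      _ = (1 + ε) * (⌈H.totalWeight / (k : ℝ)⌉ : ℝ) := by rw [htw]
  · unfold WHypergraph.connMetric
    exact Finset.sum_congr rfl (fun e _ => by rw [hconn e]; rfl)
  · unfold WHypergraph.cutMetric
    apply Finset.sum_congr
    · apply Finset.filter_congr
      intro e _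
      rw [hconn e]
    · intro e _; rfl
end

section
/- (Proposition 1, connectivity metric.) Let H = (V, N, w, c) be a hypergraph, let ε ≥ 0 and k ≥ 1, and let Π be an ε-balanced k-way partition of H whose connectivity metric value (λ − 1)_H(Π) is minimum among all ε-balanced k-way partitions of H. Let u and v be two distinct nodes that lie in the same block of Π, and let H' be the hypergraph obtained from H by contracting u and v. Then the minimum of the connectivity metric over all ε-balanced k-way partitions of H' equals (λ − 1)_H(Π). -/
open Finset

section Aux
variable {V E : Type*} [DecidableEq V] [Fintype E]

lemma contract_nodes_eq (H : WHypergraph V E) {u v : V} (hu : u ∈ H.nodes) (huv : u ≠ v) :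
    (H.contract u v).nodes = H.nodes.erase v := by
  show insert u (H.nodes.erase v) = H.nodes.erase v
  exact Finset.insert_eq_self.mpr (Finset.mem_erase.mpr ⟨huv, hu⟩)

lemma contract_connSet (H : WHypergraph V E) {k : ℕ} (u v : V) (π' : V → Fin k) (e : E) :
    (H.contract u v).connSet π' e = H.connSet (fun x => if x = v then π' u else π' x) e := by
  classical
  unfold WHypergraph.connSet WHypergraph.contract
  dsimp only
  by_cases h : v ∈ H.pins e
  · rw [if_pos h, Finset.image_insert]
    conv_rhs => rw [← Finset.insert_erase h]
    rw [Finset.image_insert]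
    congr 1
    · simp
    · apply Finset.image_congr
      intro x hx
      simp only [Finset.coe_erase, Set.mem_diff, Finset.mem_coe, Set.mem_singleton_iff] at hx
      simp [hx.2]
  · rw [if_neg h]
    apply Finset.image_congr
    intro x hx
    simp only [Finset.mem_coe] at hx
    have hxv : x ≠ v := fun hxv => h (hxv ▸ hx)
    simp [hxv]

lemma contract_connMetric (H : WHypergraph V E) {k : ℕ} (u v : V) (π' : V → Fin k) :
    (H.contract u v).connMetric π' = H.connMetric (fun x => if x = v then π' u else π' x) := by
  unfold WHypergraph.connMetric WHypergraph.connectivity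
  refine Finset.sum_congr rfl fun e _ => ?_
  rw [contract_connSet]
  rfl

lemma contract_blockWeight (H : WHypergraph V E) {k : ℕ} {u v : V} (hu : u ∈ H.nodes)
    (hv : v ∈ H.nodes) (huv : u ≠ v) (π' : V → Fin k) (i : Fin k) :
    (H.contract u v).blockWeight π' i
      = H.blockWeight (fun x => if x = v then π' u else π' x) i := by
  classical
  unfold WHypergraph.blockWeight
  rw [contract_nodes_eq H hu huv]
  have hw : (H.contract u v).w = fun x => if x = u then H.w u + H.w v else H.w x := rfl
  rw [hw, Finset.sum_filter, Finset.sum_filter]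
  conv_rhs => rw [← Finset.insert_erase hv]
  rw [Finset.sum_insert (Finset.notMem_erase v _)]
  have humem : u ∈ H.nodes.erase v := Finset.mem_erase.mpr ⟨huv, hu⟩
  rw [← Finset.insert_erase humem, Finset.sum_insert (Finset.notMem_erase u _),
      Finset.sum_insert (Finset.notMem_erase u _)]
  have hsum : ∀ x ∈ (H.nodes.erase v).erase u,
      (if π' x = i then (if x = u then H.w u + H.w v else H.w x) else 0)
        = (if (if x = v then π' u else π' x) = i then H.w x else 0) := by
    intro x hx
    have hxu : x ≠ u := (Finset.mem_erase.mp hx).1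
    have hxv : x ≠ v := (Finset.mem_erase.mp (Finset.mem_erase.mp hx).2).1
    simp [hxu, hxv]
  rw [Finset.sum_congr rfl hsum]
  simp only [if_pos rfl, huv, if_neg huv]
  by_cases h : π' u = i <;> simp [h] <;> ring

lemma contract_totalWeight (H : WHypergraph V E) {u v : V} (hu : u ∈ H.nodes)
    (hv : v ∈ H.nodes) (huv : u ≠ v) :
    (H.contract u v).totalWeight = H.totalWeight := by
  classical
  unfold WHypergraph.totalWeight
  rw [contract_nodes_eq H hu huv]
  have hw : (H.contract u v).w = fun x => if x = u then H.w u + H.w v else H.w x := rfl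
  rw [hw]
  conv_rhs => rw [← Finset.insert_erase hv]
  rw [Finset.sum_insert (Finset.notMem_erase v _)]
  have humem : u ∈ H.nodes.erase v := Finset.mem_erase.mpr ⟨huv, hu⟩
  rw [← Finset.insert_erase humem, Finset.sum_insert (Finset.notMem_erase u _),
      Finset.sum_insert (Finset.notMem_erase u _)]
  have hsum : ∀ x ∈ (H.nodes.erase v).erase u,
      (if x = u then H.w u + H.w v else H.w x) = H.w x := by
    intro x hx
    simp [(Finset.mem_erase.mp hx).1]
  rw [Finset.sum_congr rfl hsum]
  simp
  ring

lemma contract_isPartition (H : WHypergraph V E) {k : ℕ} {u v : V} (hu : u ∈ H.nodes)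
    (huv : u ≠ v) (π' : V → Fin k) :
    (H.contract u v).IsPartition k π'
      ↔ H.IsPartition k (fun x => if x = v then π' u else π' x) := by
  unfold WHypergraph.IsPartition
  rw [contract_nodes_eq H hu huv]
  constructor
  · intro h i
    obtain ⟨x, hx, hxi⟩ := h i
    have hxv : x ≠ v := (Finset.mem_erase.mp hx).1
    exact ⟨x, (Finset.mem_erase.mp hx).2, by simp [hxv, hxi]⟩
  · intro h i
    obtain ⟨x, hx, hxi⟩ := h i
    by_cases hxv : x = v
    · subst hxv
      simp only [if_pos rfl] at hxi
      exact ⟨u, Finset.mem_erase.mpr ⟨huv, hu⟩, hxi⟩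
    · exact ⟨x, Finset.mem_erase.mpr ⟨hxv, hx⟩, by simpa [hxv] using hxi⟩

lemma contract_isBalanced (H : WHypergraph V E) {k : ℕ} {u v : V} (hu : u ∈ H.nodes)
    (hv : v ∈ H.nodes) (huv : u ≠ v) (ε : ℝ) (π' : V → Fin k) :
    (H.contract u v).IsBalanced ε π'
      ↔ H.IsBalanced ε (fun x => if x = v then π' u else π' x) := by
  unfold WHypergraph.IsBalanced
  constructor
  · intro h i
    have := h i
    rwa [contract_blockWeight H hu hv huv, contract_totalWeight H hu hv huv] at this
  · intro h i
    rw [contract_blockWeight H hu hv huv, contract_totalWeight H hu hv huv]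
    exact h i

end Aux

/-- Proposition 1, connectivity metric: if `Π` minimizes the
connectivity metric among all `ε`-balanced `k`-way partitions of `H`, and
`u, v` are distinct nodes in the same block of `Π`, then the minimum of the
connectivity metric over all `ε`-balanced `k`-way partitions of the hypergraph
obtained by contracting `u` and `v` equals `(λ − 1)_H(Π)`. -/
theorem contract_min_connMetric {V E : Type*} [DecidableEq V] [Fintype E]
    (H : WHypergraph V E) (ε : ℝ) (hε : 0 ≤ ε) (k : ℕ) (hk : 1 ≤ k)
    (π : V → Fin k)
    (hπ : H.IsPartition k π) (hbal : H.IsBalanced ε π)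
    (hopt : ∀ π' : V → Fin k, H.IsPartition k π' → H.IsBalanced ε π' →
      H.connMetric π ≤ H.connMetric π')
    (u v : V) (hu : u ∈ H.nodes) (hv : v ∈ H.nodes) (huv : u ≠ v)
    (hsame : π u = π v) :
    IsLeast {r : ℝ | ∃ π' : V → Fin k,
        (H.contract u v).IsPartition k π' ∧ (H.contract u v).IsBalanced ε π' ∧
        r = (H.contract u v).connMetric π'}
      (H.connMetric π) := by
    classical
  have hππ : (fun x => if x = v then π u else π x) = π := by
    funext x
    by_cases h : x = v
    · subst h; simp [hsame]
    · simp [h]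
  constructor
  · refine ⟨π, ?_, ?_, ?_⟩
    · rw [contract_isPartition H hu huv, hππ]; exact hπ
    · rw [contract_isBalanced H hu hv huv, hππ]; exact hbal
    · rw [contract_connMetric H u v π, hππ]
  · rintro r ⟨π', hpart', hbal', rfl⟩
    rw [contract_connMetric H u v π']
    exact hopt _ ((contract_isPartition H hu huv π').mp hpart')
      ((contract_isBalanced H hu hv huv ε π').mp hbal')
end

section
/- (Proposition 1, cut metric.) Let H = (V, N, w, c) be a hypergraph, let ε ≥ 0 and k ≥ 1, and let Π be an ε-balanced k-way partition of H whose cut metric value cut_H(Π) is minimum among all ε-balanced k-way partitions of H. Let u and v be two distinct nodes that lie in the same block of Π, and let H' be the hypergraph obtained from H by contracting u and v. Then the minimum of the cut metric over all ε-balanced k-way partitions of H' equals cut_H(Π). -/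
open Finset

section Aux

variable {V E : Type*} [DecidableEq V] [Fintype E]

lemma aux_connSet (H : WHypergraph V E) {k : ℕ} (u v : V) (σ : V → Fin k) (e : E) :
    (H.contract u v).connSet σ e = H.connSet (fun x => if x = v then σ u else σ x) e := by
  unfold WHypergraph.connSet WHypergraph.contract
  dsimp only
  by_cases h : v ∈ H.pins e
  · rw [if_pos h]
    conv_rhs => rw [← Finset.insert_erase h]
    rw [Finset.image_insert, Finset.image_insert]
    simp only [if_pos rfl]
    congr 1
    apply Finset.image_congr
    intro x hx
    simp only [Finset.coe_erase, Set.mem_diff, Set.mem_singleton_iff] at hx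
    simp [hx.2]
  · rw [if_neg h]
    apply Finset.image_congr
    intro x hx
    have : x ≠ v := fun hxy => h (hxy ▸ hx)
    simp [this]

lemma aux_cutMetric (H : WHypergraph V E) {k : ℕ} (u v : V) (σ : V → Fin k) :
    (H.contract u v).cutMetric σ = H.cutMetric (fun x => if x = v then σ u else σ x) := by
  have hconn : ∀ e, (H.contract u v).connectivity σ e
      = H.connectivity (fun x => if x = v then σ u else σ x) e := by
    intro e
    unfold WHypergraph.connectivity
    rw [aux_connSet]
  unfold WHypergraph.cutMetric
  simp only [hconn]
  rfl

lemma aux_totalWeight (H : WHypergraph V E) (u v : V)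
    (hu : u ∈ H.nodes) (hv : v ∈ H.nodes) (huv : u ≠ v) :
    (H.contract u v).totalWeight = H.totalWeight := by
  have huE : u ∈ H.nodes.erase v := Finset.mem_erase.mpr ⟨huv, hu⟩
  unfold WHypergraph.totalWeight WHypergraph.contract
  dsimp only
  rw [Finset.insert_eq_self.mpr huE]
  rw [← Finset.add_sum_erase _ _ huE,
    ← Finset.add_sum_erase _ (fun x => H.w x) hv,
    ← Finset.add_sum_erase _ (fun x => H.w x) huE]
  have : ∑ x ∈ (H.nodes.erase v).erase u, (if x = u then H.w u + H.w v else H.w x)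
      = ∑ x ∈ (H.nodes.erase v).erase u, H.w x := by
    apply Finset.sum_congr rfl
    intro x hx
    simp [Finset.mem_erase.mp hx |>.1]
  rw [this, if_pos rfl]
  ring

lemma aux_blockWeight (H : WHypergraph V E) {k : ℕ} (u v : V)
    (hu : u ∈ H.nodes) (hv : v ∈ H.nodes) (huv : u ≠ v) (σ : V → Fin k) (i : Fin k) :
    (H.contract u v).blockWeight σ i
      = H.blockWeight (fun x => if x = v then σ u else σ x) i := by
  have huE : u ∈ H.nodes.erase v := Finset.mem_erase.mpr ⟨huv, hu⟩
  unfold WHypergraph.blockWeight WHypergraph.contract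
  dsimp only
  rw [Finset.insert_eq_self.mpr huE, Finset.sum_filter, Finset.sum_filter]
  rw [← Finset.add_sum_erase _ _ huE,
    ← Finset.add_sum_erase _
      (fun x => if (if x = v then σ u else σ x) = i then H.w x else 0) hv,
    ← Finset.add_sum_erase _
      (fun x => if (if x = v then σ u else σ x) = i then H.w x else 0) huE]
  have hinner : ∑ x ∈ (H.nodes.erase v).erase u,
        (if σ x = i then (if x = u then H.w u + H.w v else H.w x) else 0)
      = ∑ x ∈ (H.nodes.erase v).erase u,
        (if (if x = v then σ u else σ x) = i then H.w x else 0) := by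
    apply Finset.sum_congr rfl
    intro x hx
    have hxu : x ≠ u := (Finset.mem_erase.mp hx).1
    have hxv : x ≠ v := (Finset.mem_erase.mp (Finset.mem_erase.mp hx).2).1
    simp [hxu, hxv]
  rw [hinner]
  by_cases h : σ u = i <;> simp [h, huv] <;> ring

lemma aux_partition (H : WHypergraph V E) {k : ℕ} (u v : V)
    (hu : u ∈ H.nodes) (huv : u ≠ v) (σ : V → Fin k) :
    (H.contract u v).IsPartition k σ
      ↔ H.IsPartition k (fun x => if x = v then σ u else σ x) := by
  unfold WHypergraph.IsPartition WHypergraph.contract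
  dsimp only
  constructor
  · intro hσ i
    obtain ⟨x, hx, hxi⟩ := hσ i
    rcases Finset.mem_insert.mp hx with rfl | hx'
    · exact ⟨x, hu, by simpa [huv] using hxi⟩
    · obtain ⟨hxv, hxn⟩ := Finset.mem_erase.mp hx'
      exact ⟨x, hxn, by simpa [hxv] using hxi⟩
  · intro hτ i
    obtain ⟨x, hx, hxi⟩ := hτ i
    by_cases hxv : x = v
    · subst hxv
      rw [if_pos rfl] at hxi
      exact ⟨u, Finset.mem_insert_self _ _, hxi⟩
    · rw [if_neg hxv] at hxi
      exact ⟨x, Finset.mem_insert_of_mem (Finset.mem_erase.mpr ⟨hxv, hx⟩), hxi⟩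

lemma aux_balanced (H : WHypergraph V E) (ε : ℝ) {k : ℕ} (u v : V)
    (hu : u ∈ H.nodes) (hv : v ∈ H.nodes) (huv : u ≠ v) (σ : V → Fin k) :
    (H.contract u v).IsBalanced ε σ
      ↔ H.IsBalanced ε (fun x => if x = v then σ u else σ x) := by
  unfold WHypergraph.IsBalanced
  constructor <;> intro hb i
  · rw [← aux_blockWeight H u v hu hv huv, ← aux_totalWeight H u v hu hv huv]
    exact hb i
  · rw [aux_blockWeight H u v hu hv huv, aux_totalWeight H u v hu hv huv]
    exact hb i

end Aux

/-- Proposition 1, cut metric: if `Π` minimizes the cut metric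
among all `ε`-balanced `k`-way partitions of `H`, and `u, v` are distinct nodes
in the same block of `Π`, then the minimum of the cut metric over all
`ε`-balanced `k`-way partitions of the hypergraph obtained by contracting `u`
and `v` equals `cut_H(Π)`. -/
theorem contract_min_cutMetric {V E : Type*} [DecidableEq V] [Fintype E]
    (H : WHypergraph V E) (ε : ℝ) (hε : 0 ≤ ε) (k : ℕ) (hk : 1 ≤ k)
    (π : V → Fin k)
    (hπ : H.IsPartition k π) (hbal : H.IsBalanced ε π)
    (hopt : ∀ π' : V → Fin k, H.IsPartition k π' → H.IsBalanced ε π' →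
      H.cutMetric π ≤ H.cutMetric π')
    (u v : V) (hu : u ∈ H.nodes) (hv : v ∈ H.nodes) (huv : u ≠ v)
    (hsame : π u = π v) :
    IsLeast {r : ℝ | ∃ π' : V → Fin k,
        (H.contract u v).IsPartition k π' ∧ (H.contract u v).IsBalanced ε π' ∧
        r = (H.contract u v).cutMetric π'}
      (H.cutMetric π) := by
  have hτπ : (fun x => if x = v then π u else π x) = π := by
    funext x
    by_cases h : x = v
    · subst h; simp [hsame]
    · simp [h]
  constructor
  · refine ⟨π, ?_, ?_, ?_⟩
    · rw [aux_partition H u v hu huv, hτπ]; exact hπ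
    · rw [aux_balanced H ε u v hu hv huv, hτπ]; exact hbal
    · rw [aux_cutMetric, hτπ]
  · rintro r ⟨σ, hp, hb, rfl⟩
    rw [aux_cutMetric]
    exact hopt _ ((aux_partition H u v hu huv σ).mp hp)
      ((aux_balanced H ε u v hu hv huv σ).mp hb)
end
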